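/- Let T be a finite tree on vertex set V, let c : V × V → ℝ≥0 be a cost function that is monotone non-decreasing with respect to the target, and let x : V × V → [0,1] be a function satisfying, for every pair v, w ∈ V, Σ_{u ∈ P(v,w)} min(x(u,v), x(u,w)) ≥ 1. Then there exists a pseudo-separator assignment S : V → (finite subsets of V) such that for every v ∈ V, Σ_{u ∈ S(v)} c(u,v) ≤ 2 · Σ_{u ∈ V} c(u,v) · x(u,v). -/

import Mathlib

open scoped Classical

/-- The vertex set of the unique path between `u` and `v` in a tree `G`
(stated via existence of a path containing the vertex, which in a tree is
the unique path). -/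
def pathSet {V : Type*} (G : SimpleGraph V) (u v : V) : Set V :=
  {x | ∃ p : G.Path u v, x ∈ (p : G.Walk u v).support}

/-- A pseudo-separator assignment: for every pair `u, v` there exist
`u' ∈ S(u)` and `v' ∈ S(v)` with `u' ∈ P(v, v')` and `v' ∈ P(u, u')`. -/
def IsPseudoSepAssignment {V : Type*} (G : SimpleGraph V) (S : V → Finset V) : Prop :=
  ∀ u v : V, ∃ u' ∈ S u, ∃ v' ∈ S v,
    u' ∈ pathSet G v v' ∧ v' ∈ pathSet G u u'

namespace Stmt13X

open SimpleGraph Finset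

variable {V : Type*} {G : SimpleGraph V}

def wtake {G : SimpleGraph V} : {a b : V} → (p : G.Walk a b) → (n : ℕ) → G.Walk a (p.getVert n)
  | _, _, .nil, _ => .nil
  | _, _, .cons _ _, 0 => .nil
  | _, _, .cons h q, n+1 => .cons h (wtake q n)

lemma support_eq_map {G : SimpleGraph V} {a b : V} (p : G.Walk a b) :
    p.support = (List.range (p.length+1)).map p.getVert := by
  induction p with
  | nil => simp [List.range_succ]
  | @cons a c b h q ih =>
    rw [SimpleGraph.Walk.length_cons, List.range_succ_eq_map, List.map_cons, List.map_map,
      SimpleGraph.Walk.support_cons, ih]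
    congr 1

lemma wtake_support {G : SimpleGraph V} : ∀ {a b : V} (p : G.Walk a b) (n : ℕ), n ≤ p.length →
    (wtake p n).support = (List.range (n+1)).map p.getVert := by
  intro a b p
  induction p with
  | nil =>
    intro n hn
    obtain rfl : n = 0 := by simpa using hn
    simp [wtake, List.range_succ]
  | @cons a c b h q ih =>
    intro n hn
    match n with
    | 0 => simp [wtake, List.range_succ]; rfl
    | (n+1) =>
      rw [SimpleGraph.Walk.length_cons] at hn
      show (SimpleGraph.Walk.cons h (wtake q n)).support = _
      rw [List.range_succ_eq_map, List.map_cons, List.map_map,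
        SimpleGraph.Walk.support_cons, ih n (by omega)]
      congr 1

lemma wtake_length {G : SimpleGraph V} : ∀ {a b : V} (p : G.Walk a b) (n : ℕ), n ≤ p.length →
    (wtake p n).length = n := by
  intro a b p
  induction p with
  | nil =>
    intro n hn
    obtain rfl : n = 0 := by simpa using hn
    simp [wtake]
  | @cons a c b h q ih =>
    intro n hn
    match n with
    | 0 => simp [wtake]; rfl
    | (n+1) =>
      rw [SimpleGraph.Walk.length_cons] at hn
      show (SimpleGraph.Walk.cons h (wtake q n)).length = n + 1
      rw [SimpleGraph.Walk.length_cons, ih n (by omega)]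

lemma getVert_inj {G : SimpleGraph V} {a b : V} {p : G.Walk a b} (hp : p.IsPath)
    {i j : ℕ} (hi : i ≤ p.length) (hj : j ≤ p.length) (h : p.getVert i = p.getVert j) :
    i = j := by
  have hn := hp.support_nodup
  rw [support_eq_map] at hn
  exact List.inj_on_of_nodup_map hn (by simp [Nat.lt_succ_iff, hi])
    (by simp [Nat.lt_succ_iff, hj]) h

lemma wtake_isPath {G : SimpleGraph V} {a b : V} {p : G.Walk a b} (hp : p.IsPath)
    {n : ℕ} (hn : n ≤ p.length) : (wtake p n).IsPath := by
  rw [SimpleGraph.Walk.isPath_def, wtake_support p n hn]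
  have hsub := List.Sublist.map p.getVert
    (List.range_sublist.2 (show n+1 ≤ p.length+1 by omega))
  have h2 := hp.support_nodup
  rw [support_eq_map] at h2
  exact h2.sublist hsub

lemma getVert_mem_support {G : SimpleGraph V} {a b : V} (p : G.Walk a b) {i : ℕ}
    (hi : i ≤ p.length) : p.getVert i ∈ p.support := by
  rw [support_eq_map]
  exact List.mem_map_of_mem (by simp [Nat.lt_succ_iff, hi])


lemma pathSet_eq_support (hT : G.IsTree) {a b : V} (p : G.Walk a b) (hp : p.IsPath) :
    pathSet G a b = {t | t ∈ p.support} := by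
  ext t
  constructor
  · rintro ⟨q, hq⟩
    have : (q : G.Walk a b) = p := (hT.existsUnique_path a b).unique q.2 hp
    rwa [this] at hq
  · exact fun h => ⟨⟨p, hp⟩, h⟩

lemma start_mem_pathSet (hT : G.IsTree) (a b : V) : a ∈ pathSet G a b := by
  obtain ⟨p, hp, -⟩ := hT.existsUnique_path a b
  exact ⟨⟨p, hp⟩, p.start_mem_support⟩

lemma end_mem_pathSet (hT : G.IsTree) (a b : V) : b ∈ pathSet G a b := by
  obtain ⟨p, hp, -⟩ := hT.existsUnique_path a b
  exact ⟨⟨p, hp⟩, p.end_mem_support⟩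

lemma pathSet_symm {a b t : V} (h : t ∈ pathSet G a b) : t ∈ pathSet G b a := by
  obtain ⟨q, hq⟩ := h
  exact ⟨q.reverse, by
    show t ∈ (q : G.Walk a b).reverse.support
    rwa [SimpleGraph.Walk.support_reverse, List.mem_reverse]⟩

lemma isPath_self_support {a : V} (w : G.Walk a a) (hw : w.IsPath) : w.support = [a] := by
  cases w with
  | nil => rfl
  | cons h r =>
    rw [SimpleGraph.Walk.cons_isPath_iff] at hw
    exact absurd r.end_mem_support hw.2

lemma pathSet_self (a : V) : pathSet G a a = {a} := by
  ext t
  constructor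
  · rintro ⟨q, hq⟩
    have := isPath_self_support (q : G.Walk a a) q.2
    rw [this] at hq
    simpa using hq
  · rintro rfl
    exact ⟨⟨SimpleGraph.Walk.nil, SimpleGraph.Walk.IsPath.nil⟩, by simp⟩

lemma pathSet_trans (hT : G.IsTree) {r s w t : V} (h1 : t ∈ pathSet G r s)
    (h2 : s ∈ pathSet G r w) : t ∈ pathSet G r w := by
  obtain ⟨q, hs⟩ := h2
  have hq2 := q.2.takeUntil hs
  have := pathSet_eq_support hT _ hq2
  rw [this] at h1
  exact ⟨q, SimpleGraph.Walk.support_takeUntil_subset _ hs h1⟩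

/-- membership in `pathSet` via an index on a given path -/
lemma mem_pathSet_iff (hT : G.IsTree) {a b : V} {p : G.Walk a b} (hp : p.IsPath) {t : V} :
    t ∈ pathSet G a b ↔ ∃ i, i ≤ p.length ∧ p.getVert i = t := by
  rw [pathSet_eq_support hT p hp]
  simp [support_eq_map, Nat.lt_succ_iff]

lemma pathSet_getVert (hT : G.IsTree) {a b : V} {p : G.Walk a b} (hp : p.IsPath) {n : ℕ}
    (hn : n ≤ p.length) {t : V} :
    t ∈ pathSet G a (p.getVert n) ↔ ∃ i, i ≤ n ∧ p.getVert i = t := by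
  rw [pathSet_eq_support hT (wtake p n) (wtake_isPath hp hn), Set.mem_setOf_eq,
    wtake_support p n hn]
  constructor
  · intro h
    obtain ⟨i, hi, rfl⟩ := by simpa [Nat.lt_succ_iff] using h
    exact ⟨i, hi, rfl⟩
  · rintro ⟨i, hi, rfl⟩
    simp only [List.mem_map, List.mem_range]
    exact ⟨i, by omega, rfl⟩


section P3
variable [Fintype V]

noncomputable def childrenF (G : SimpleGraph V) [Fintype V] (r t : V) : Finset V :=
  univ.filter (fun s => G.Adj t s ∧ t ∈ pathSet G r s ∧ s ∉ pathSet G r t)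

noncomputable def stree (G : SimpleGraph V) [Fintype V] (r t : V) : Finset V :=
  univ.filter (fun s => t ∈ pathSet G r s)

lemma mem_stree {r t s : V} : s ∈ stree G r t ↔ t ∈ pathSet G r s := by
  simp [stree]

lemma mem_childrenF {r t s : V} : s ∈ childrenF G r t ↔
    G.Adj t s ∧ t ∈ pathSet G r s ∧ s ∉ pathSet G r t := by
  simp [childrenF]

lemma self_mem_stree (hT : G.IsTree) (r t : V) : t ∈ stree G r t :=
  mem_stree.2 (end_mem_pathSet hT r t)

lemma stree_card_lt (hT : G.IsTree) {r t s : V} (hs : s ∈ childrenF G r t) :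
    (stree G r s).card < (stree G r t).card := by
  obtain ⟨hadj, hts, hst⟩ := mem_childrenF.1 hs
  apply Finset.card_lt_card
  rw [Finset.ssubset_def]
  constructor
  · exact fun w hw => mem_stree.2 (pathSet_trans hT hts (mem_stree.1 hw))
  · intro hsub
    exact hst (mem_stree.1 (hsub (self_mem_stree hT r t)))

lemma exists_child (hT : G.IsTree) {r t w : V} (hw : t ∈ pathSet G r w) (hne : w ≠ t) :
    ∃ s ∈ childrenF G r t, w ∈ stree G r s := by
  obtain ⟨p, hp, -⟩ := hT.existsUnique_path r w
  obtain ⟨i, hik, hgv⟩ := (mem_pathSet_iff hT hp).1 hw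
  have hik' : i < p.length := by
    rcases Nat.lt_or_ge i p.length with h | h
    · exact h
    · exfalso
      have hi : i = p.length := le_antisymm hik h
      rw [hi, p.getVert_length] at hgv
      exact hne hgv
  refine ⟨p.getVert (i+1), ?_, ?_⟩
  · rw [mem_childrenF]
    refine ⟨?_, ?_, ?_⟩
    · rw [← hgv]; exact p.adj_getVert_succ hik'
    · rw [← hgv]
      exact (pathSet_getVert hT hp (by omega)).2 ⟨i, by omega, rfl⟩
    · rw [← hgv]
      intro hmem
      obtain ⟨j, hj, hje⟩ := (pathSet_getVert hT hp hik).1 hmem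
      have := getVert_inj hp (by omega) (by omega) hje
      omega
  · exact mem_stree.2 ((mem_pathSet_iff hT hp).2 ⟨i+1, by omega, rfl⟩)

lemma child_unique (hT : G.IsTree) {r t w s1 s2 : V} (h1 : s1 ∈ childrenF G r t)
    (h2 : s2 ∈ childrenF G r t) (hw1 : w ∈ stree G r s1) (hw2 : w ∈ stree G r s2) :
    s1 = s2 := by
  obtain ⟨p, hp, -⟩ := hT.existsUnique_path r w
  have htw : t ∈ pathSet G r w :=
    pathSet_trans hT (mem_childrenF.1 h1).2.1 (mem_stree.1 hw1)
  obtain ⟨j, hjk, hgj⟩ := (mem_pathSet_iff hT hp).1 htw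
  have key : ∀ s, s ∈ childrenF G r t → s ∈ pathSet G r w → s = p.getVert (j+1) := by
    intro s hs hsw
    obtain ⟨hadj, hts, hst⟩ := mem_childrenF.1 hs
    obtain ⟨i, hik, hgi⟩ := (mem_pathSet_iff hT hp).1 hsw
    -- t is on the path to s, at index j ≤ i
    have hji : j < i := by
      have hj_le_i : j ≤ i := by
        rw [← hgi] at hts
        obtain ⟨j', hj', hgj'⟩ := (pathSet_getVert hT hp hik).1 hts
        have := getVert_inj hp (by omega) hjk (hgj'.trans hgj.symm)
        omega
      rcases Nat.lt_or_ge j i with h | h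
      · exact h
      · exfalso
        have : i = j := by omega
        subst this
        apply hst
        rw [← hgi, ← hgj]
        exact (pathSet_getVert hT hp hik).2 ⟨i, le_rfl, rfl⟩
    -- the walk  (wtake p j) + edge t-s  is a path from r to s
    have hadj' : G.Adj (p.getVert j) (p.getVert i) := by rw [hgj, hgi]; exact hadj
    set W : G.Walk r (p.getVert i) := (wtake p j).concat hadj' with hW
    have hWpath : W.IsPath := by
      rw [SimpleGraph.Walk.isPath_def, SimpleGraph.Walk.support_concat,
        List.nodup_append']
      refine ⟨(wtake_isPath hp (by omega)).support_nodup, List.nodup_singleton _, ?_⟩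
      intro z hz hz'
      rw [List.mem_singleton] at hz'
      subst hz'
      rw [wtake_support p j (by omega)] at hz
      obtain ⟨j'', hj'', hgj''⟩ := by simpa [Nat.lt_succ_iff] using hz
      have := getVert_inj hp (by omega) hik hgj''
      omega
    have hWeq : W = wtake p i :=
      (hT.existsUnique_path r (p.getVert i)).unique hWpath (wtake_isPath hp hik)
    have hlen : W.length = (wtake p j).length + 1 := SimpleGraph.Walk.length_concat _ _
    rw [hWeq, wtake_length p i hik, wtake_length p j (by omega)] at hlen
    rw [← hgi, hlen]
  rw [key s1 h1 (mem_stree.1 hw1), key s2 h2 (mem_stree.1 hw2)]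

lemma stree_eq (hT : G.IsTree) (r t : V) :
    stree G r t = insert t ((childrenF G r t).biUnion (fun s => stree G r s)) := by
  ext w
  rw [Finset.mem_insert, Finset.mem_biUnion]
  constructor
  · intro hw
    by_cases hwt : w = t
    · exact Or.inl hwt
    · exact Or.inr (exists_child hT (mem_stree.1 hw) hwt)
  · rintro (rfl | ⟨s, hs, hws⟩)
    · exact self_mem_stree hT r w
    · exact mem_stree.2 (pathSet_trans hT (mem_childrenF.1 hs).2.1 (mem_stree.1 hws))

lemma stree_sum (hT : G.IsTree) (r t : V) (f : V → ℝ) :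
    ∑ w ∈ stree G r t, f w = f t + ∑ s ∈ childrenF G r t, ∑ w ∈ stree G r s, f w := by
  have hnot : t ∉ (childrenF G r t).biUnion (fun s => stree G r s) := by
    rw [Finset.mem_biUnion]
    rintro ⟨s, hs, hts⟩
    exact (mem_childrenF.1 hs).2.2 (mem_stree.1 hts)
  have hdisj : (↑(childrenF G r t) : Set V).PairwiseDisjoint (fun s => stree G r s) := by
    intro s1 hs1 s2 hs2 hne
    rw [Function.onFun, Finset.disjoint_left]
    intro w hw1 hw2
    exact hne (child_unique hT (by simpa using hs1) (by simpa using hs2) hw1 hw2)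
  rw [stree_eq hT r t, Finset.sum_insert hnot, Finset.sum_biUnion hdisj]

end P3

section P4
variable [Fintype V]

noncomputable def sigAux (G : SimpleGraph V) [Fintype V] (x : V → V → ℝ) (r : V) : ℕ → V → ℝ
  | 0, _ => 0
  | (n+1), t =>
    if (x t r + ∑ s ∈ childrenF G r t, sigAux G x r n s) < 1/2 then
      x t r + ∑ s ∈ childrenF G r t, sigAux G x r n s
    else 0

lemma sigAux_stable (hT : G.IsTree) (x : V → V → ℝ) (r : V) :
    ∀ n m t, (stree G r t).card ≤ n → (stree G r t).card ≤ m →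
      sigAux G x r n t = sigAux G x r m t := by
  intro n
  induction n with
  | zero =>
    intro m t h _
    exact absurd (Finset.card_pos.2 ⟨t, self_mem_stree hT r t⟩) (by omega)
  | succ n ih =>
    intro m t hn hm
    match m with
    | 0 => exact absurd (Finset.card_pos.2 ⟨t, self_mem_stree hT r t⟩) (by omega)
    | (m+1) =>
      have hsum : ∑ s ∈ childrenF G r t, sigAux G x r n s
          = ∑ s ∈ childrenF G r t, sigAux G x r m s := by
        apply Finset.sum_congr rfl
        intro s hs
        have hc := stree_card_lt hT hs
        exact ih m s (by omega) (by omega)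
      simp only [sigAux]
      rw [hsum]

noncomputable def sig (G : SimpleGraph V) [Fintype V] (x : V → V → ℝ) (r t : V) : ℝ :=
  sigAux G x r (Fintype.card V + 1) t

noncomputable def acc (G : SimpleGraph V) [Fintype V] (x : V → V → ℝ) (r t : V) : ℝ :=
  x t r + ∑ s ∈ childrenF G r t, sig G x r s

lemma sig_spec (hT : G.IsTree) (x : V → V → ℝ) (r t : V) :
    sig G x r t = if acc G x r t < 1/2 then acc G x r t else 0 := by
  have hsum : ∑ s ∈ childrenF G r t, sigAux G x r (Fintype.card V) s
      = ∑ s ∈ childrenF G r t, sig G x r s := by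
    apply Finset.sum_congr rfl
    intro s hs
    exact sigAux_stable hT x r _ _ s (Finset.card_le_univ _) (by
      have := Finset.card_le_univ (stree G r s); omega)
  show sigAux G x r (Fintype.card V + 1) t = _
  simp only [sigAux]
  rw [hsum]
  rfl

lemma sigAux_nonneg (x : V → V → ℝ) (r : V) (hx : ∀ a b, 0 ≤ x a b) :
    ∀ n t, 0 ≤ sigAux G x r n t := by
  intro n
  induction n with
  | zero => intro t; simp [sigAux]
  | succ n ih =>
    intro t
    simp only [sigAux]
    split
    · exact add_nonneg (hx t r) (Finset.sum_nonneg fun s _ => ih s)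
    · exact le_rfl
  
lemma sig_nonneg (x : V → V → ℝ) (r : V) (hx : ∀ a b, 0 ≤ x a b) (t : V) :
    0 ≤ sig G x r t := sigAux_nonneg x r hx _ t

lemma sig_lt_half (hT : G.IsTree) (x : V → V → ℝ) (r t : V) : sig G x r t < 1/2 := by
  rw [sig_spec hT]
  split
  · assumption
  · norm_num

lemma sig_of_not_chosen (hT : G.IsTree) {x : V → V → ℝ} {r t : V}
    (h : acc G x r t < 1/2) : sig G x r t = acc G x r t := by
  rw [sig_spec hT, if_pos h]

lemma sig_of_chosen (hT : G.IsTree) {x : V → V → ℝ} {r t : V}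
    (h : ¬ acc G x r t < 1/2) : sig G x r t = 0 := by
  rw [sig_spec hT, if_neg h]

noncomputable def chosenS (G : SimpleGraph V) [Fintype V] (x : V → V → ℝ) (r : V) : Finset V :=
  univ.filter (fun t => ¬ (acc G x r t < 1/2))

end P4

section P5
variable [Fintype V]

lemma budget_aux (hT : G.IsTree) (x c : V → V → ℝ) (hx0 : ∀ a b, 0 ≤ x a b)
    (hc0 : ∀ a b, 0 ≤ c a b) (hmono : ∀ u v t : V, u ∈ pathSet G v t → c u t ≤ c v t) (r : V) :
    ∀ n t, (stree G r t).card ≤ n →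
      (∑ w ∈ stree G r t, (if ¬ (acc G x r w < 1/2) then c w r else 0))
          + 2 * sig G x r t * c t r
        ≤ 2 * ∑ w ∈ stree G r t, c w r * x w r := by
  intro n
  induction n with
  | zero =>
    intro t h
    exact absurd (Finset.card_pos.2 ⟨t, self_mem_stree hT r t⟩) (by omega)
  | succ n ih =>
    intro t hn
    rw [stree_sum hT r t (fun w => if ¬ (acc G x r w < 1/2) then c w r else 0),
      stree_sum hT r t (fun w => c w r * x w r)]
    have hchild : ∀ s ∈ childrenF G r t,
        (∑ w ∈ stree G r s, (if ¬ (acc G x r w < 1/2) then c w r else 0))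
            + 2 * sig G x r s * c t r
          ≤ 2 * ∑ w ∈ stree G r s, c w r * x w r := by
      intro s hs
      have h1 := ih s (by have := stree_card_lt hT hs; omega)
      have h2 : c t r ≤ c s r :=
        hmono t s r (pathSet_symm (mem_childrenF.1 hs).2.1)
      have h3 : 0 ≤ sig G x r s := sig_nonneg x r hx0 s
      nlinarith
    have hsum2 := Finset.sum_le_sum hchild
    rw [Finset.sum_add_distrib] at hsum2
    have e1 : ∑ s ∈ childrenF G r t, 2 * sig G x r s * c t r
        = 2 * (∑ s ∈ childrenF G r t, sig G x r s) * c t r := by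
      rw [← Finset.sum_mul, ← Finset.mul_sum]
    rw [e1] at hsum2
    have e2 : ∑ s ∈ childrenF G r t, 2 * ∑ w ∈ stree G r s, c w r * x w r
        = 2 * ∑ s ∈ childrenF G r t, ∑ w ∈ stree G r s, c w r * x w r := by
      rw [Finset.mul_sum]
    rw [e2] at hsum2
    -- head inequality
    have hacc : acc G x r t = x t r + ∑ s ∈ childrenF G r t, sig G x r s := rfl
    have hhead : (if ¬ (acc G x r t < 1/2) then c t r else 0) + 2 * sig G x r t * c t r
        ≤ 2 * (c t r * x t r) + 2 * (∑ s ∈ childrenF G r t, sig G x r s) * c t r := by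
      by_cases hch : acc G x r t < 1/2
      · rw [if_neg (by simpa using hch), sig_of_not_chosen hT hch, hacc]
        ring_nf
        try linarith
      · rw [if_pos hch, sig_of_chosen hT hch]
        have h5 : (1:ℝ)/2 ≤ acc G x r t := not_lt.1 hch
        rw [hacc] at h5
        nlinarith [hc0 t r, mul_nonneg (hc0 t r)
          (show (0:ℝ) ≤ x t r + (∑ s ∈ childrenF G r t, sig G x r s) - 1/2 by linarith)]
    linarith [hsum2, hhead]

lemma budget (hT : G.IsTree) (x c : V → V → ℝ) (hx0 : ∀ a b, 0 ≤ x a b)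
    (hc0 : ∀ a b, 0 ≤ c a b) (hmono : ∀ u v t : V, u ∈ pathSet G v t → c u t ≤ c v t) (r : V) :
    ∑ w ∈ chosenS G x r, c w r ≤ 2 * ∑ w : V, c w r * x w r := by
  have huniv : stree G r r = univ := by
    ext w
    simp only [mem_stree, Finset.mem_univ, iff_true]
    exact start_mem_pathSet hT r w
  have h := budget_aux hT x c hx0 hc0 hmono r (Fintype.card V) r (Finset.card_le_univ _)
  rw [huniv] at h
  have hfil : ∑ w ∈ chosenS G x r, c w r
      = ∑ w ∈ univ, (if ¬ (acc G x r w < 1/2) then c w r else 0) := by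
    rw [chosenS, Finset.sum_filter]
  rw [hfil]
  have h3 : 0 ≤ sig G x r r := sig_nonneg x r hx0 r
  nlinarith [hc0 r r]

end P5

section P6
variable [Fintype V]

lemma getVert_succ_mem_children (hT : G.IsTree) {u w : V} {p : G.Walk u w} (hp : p.IsPath)
    {i : ℕ} (hi : i < p.length) :
    p.getVert (i+1) ∈ childrenF G u (p.getVert i) := by
  rw [mem_childrenF]
  refine ⟨p.adj_getVert_succ hi, ?_, ?_⟩
  · exact (pathSet_getVert hT hp (by omega)).2 ⟨i, by omega, rfl⟩
  · intro hmem
    obtain ⟨j, hj, hje⟩ := (pathSet_getVert hT hp (by omega : i ≤ p.length)).1 hmem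
    have := getVert_inj hp (by omega) (by omega) hje
    omega

lemma suffix_bound (hT : G.IsTree) (x : V → V → ℝ) (hx0 : ∀ a b, 0 ≤ x a b)
    {u w : V} (p : G.Walk u w) (hp : p.IsPath) :
    ∀ m i, i ≤ p.length → p.length - i ≤ m →
      (∀ j, i ≤ j → j ≤ p.length → acc G x u (p.getVert j) < 1/2) →
      ∑ j ∈ Finset.Icc i p.length, x (p.getVert j) u ≤ sig G x u (p.getVert i) := by
  intro m
  induction m with
  | zero =>
    intro i hik _ hall
    have : i = p.length := by omega
    subst this
    rw [Finset.Icc_self, Finset.sum_singleton,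
      sig_of_not_chosen hT (hall p.length le_rfl le_rfl)]
    have h0 : (0:ℝ) ≤ ∑ s ∈ childrenF G u (p.getVert p.length), sig G x u s :=
      Finset.sum_nonneg fun s _ => sig_nonneg x u hx0 s
    show _ ≤ x (p.getVert p.length) u + _
    linarith
  | succ m ih =>
    intro i hik _ hall
    by_cases hieq : i = p.length
    · subst hieq
      rw [Finset.Icc_self, Finset.sum_singleton,
        sig_of_not_chosen hT (hall p.length le_rfl le_rfl)]
      have h0 : (0:ℝ) ≤ ∑ s ∈ childrenF G u (p.getVert p.length), sig G x u s :=
        Finset.sum_nonneg fun s _ => sig_nonneg x u hx0 s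
      show _ ≤ x (p.getVert p.length) u + _
      linarith
    · have hi' : i < p.length := by omega
      have hsplit : Finset.Icc i p.length = insert i (Finset.Icc (i+1) p.length) := by
        ext j
        simp only [Finset.mem_Icc, Finset.mem_insert]
        omega
      rw [hsplit, Finset.sum_insert (by simp [Finset.mem_Icc])]
      have hch := getVert_succ_mem_children hT hp hi'
      have hrec := ih (i+1) (by omega) (by omega) (fun j h1 h2 => hall j (by omega) h2)
      have hge : sig G x u (p.getVert (i+1))
          ≤ ∑ s ∈ childrenF G u (p.getVert i), sig G x u s :=
        Finset.single_le_sum (fun s _ => sig_nonneg x u hx0 s) hch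
      rw [sig_of_not_chosen hT (hall i le_rfl (by omega))]
      show _ ≤ x (p.getVert i) u + _
      linarith

lemma crossing (hT : G.IsTree) (x : V → V → ℝ) (hx0 : ∀ a b, 0 ≤ x a b)
    (hxd : ∀ a, 1 ≤ x a a)
    (hfeas : ∀ v w : V,
      1 ≤ ∑ t ∈ Finset.univ.filter (· ∈ pathSet G v w), min (x t v) (x t w))
    (u v : V) :
    ∃ u' ∈ chosenS G x u, ∃ v' ∈ chosenS G x v,
      u' ∈ pathSet G v v' ∧ v' ∈ pathSet G u u' := by
  obtain ⟨p, hp, -⟩ := hT.existsUnique_path u v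
  set k := p.length with hk
  have hqp : p.reverse.IsPath := hp.reverse
  set q := p.reverse with hq
  have hqlen : q.length = k := by rw [hq, SimpleGraph.Walk.length_reverse]
  have hqv : ∀ i, q.getVert i = p.getVert (k - i) := by
    intro i; rw [hq, SimpleGraph.Walk.getVert_reverse]
  have hchroot : ∀ (a : V), ¬ acc G x a a < 1/2 := by
    intro a h
    have h0 : (0:ℝ) ≤ ∑ s ∈ childrenF G a a, sig G x a s :=
      Finset.sum_nonneg fun s _ => sig_nonneg x a hx0 s
    have h1 := hxd a
    have h2 : acc G x a a = x a a + ∑ s ∈ childrenF G a a, sig G x a s := rfl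
    rw [h2] at h
    linarith
  -- u-side maximal chosen index
  have hune : ((Finset.range (k+1)).filter
      (fun i => ¬ acc G x u (p.getVert i) < 1/2)).Nonempty := by
    refine ⟨0, Finset.mem_filter.2 ⟨Finset.mem_range.2 (by omega), ?_⟩⟩
    rw [p.getVert_zero]
    exact hchroot u
  set a := ((Finset.range (k+1)).filter
      (fun i => ¬ acc G x u (p.getVert i) < 1/2)).max' hune with ha
  have haF := Finset.max'_mem _ hune
  rw [Finset.mem_filter, Finset.mem_range] at haF
  obtain ⟨hak, hach⟩ := haF
  have hamax : ∀ j, j ≤ k → ¬ acc G x u (p.getVert j) < 1/2 → j ≤ a := by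
    intro j hj hcj
    exact Finset.le_max' _ j (Finset.mem_filter.2 ⟨Finset.mem_range.2 (by omega), hcj⟩)
  -- v-side maximal chosen index along q
  have hvne : ((Finset.range (k+1)).filter
      (fun i => ¬ acc G x v (q.getVert i) < 1/2)).Nonempty := by
    refine ⟨0, Finset.mem_filter.2 ⟨Finset.mem_range.2 (by omega), ?_⟩⟩
    rw [q.getVert_zero]
    exact hchroot v
  set β := ((Finset.range (k+1)).filter
      (fun i => ¬ acc G x v (q.getVert i) < 1/2)).max' hvne with hβ
  have hβF := Finset.max'_mem _ hvne
  rw [Finset.mem_filter, Finset.mem_range] at hβF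
  obtain ⟨hβk, hβch⟩ := hβF
  have hβmax : ∀ j, j ≤ k → ¬ acc G x v (q.getVert j) < 1/2 → j ≤ β := by
    intro j hj hcj
    exact Finset.le_max' _ j (Finset.mem_filter.2 ⟨Finset.mem_range.2 (by omega), hcj⟩)
  set b := k - β with hb
  by_cases hba : b ≤ a
  · refine ⟨p.getVert a, ?_, q.getVert β, ?_, ?_, ?_⟩
    · exact Finset.mem_filter.2 ⟨Finset.mem_univ _, hach⟩
    · exact Finset.mem_filter.2 ⟨Finset.mem_univ _, hβch⟩
    · apply (pathSet_getVert hT hqp (show β ≤ q.length by omega)).2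
      refine ⟨k - a, by omega, ?_⟩
      rw [hqv (k-a)]
      congr 1
      omega
    · apply (pathSet_getVert hT hp (show a ≤ p.length by omega)).2
      refine ⟨b, by omega, ?_⟩
      rw [hqv β]
  · exfalso
    push_neg at hba
    have hbk : b ≤ k := by omega
    have hA : ∑ j ∈ Finset.Icc (a+1) k, x (p.getVert j) u < 1/2 := by
      have hs := suffix_bound hT x hx0 p hp (k - (a+1)) (a+1) (by omega) (by omega) ?_
      · exact lt_of_le_of_lt hs (sig_lt_half hT x u _)
      · intro j h1 h2
        by_contra hcc
        have := hamax j h2 hcc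
        omega
    have hB : ∑ j ∈ Finset.Icc (β+1) k, x (q.getVert j) v < 1/2 := by
      have hβlt : β < k := by omega
      have hs := suffix_bound hT x hx0 q hqp (q.length - (β+1)) (β+1)
        (by omega) (by omega) ?_
      · rw [hqlen] at hs
        exact lt_of_le_of_lt hs (sig_lt_half hT x v _)
      · intro j h1 h2
        by_contra hcc
        have := hβmax j (by omega) hcc
        omega
    have hBrw : ∑ j ∈ Finset.Icc (β+1) k, x (q.getVert j) v
        = ∑ j ∈ Finset.Ico 0 b, x (p.getVert j) v := by
      refine Finset.sum_nbij' (fun j => k - j) (fun j => k - j) ?_ ?_ ?_ ?_ ?_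
      · intro i hi
        rw [Finset.mem_Icc] at hi
        show k - i ∈ Finset.Ico 0 b
        rw [Finset.mem_Ico]
        omega
      · intro i hi
        rw [Finset.mem_Ico] at hi
        show k - i ∈ Finset.Icc (β+1) k
        rw [Finset.mem_Icc]
        omega
      · intro i hi
        rw [Finset.mem_Icc] at hi
        show k - (k - i) = i
        omega
      · intro i hi
        rw [Finset.mem_Ico] at hi
        show k - (k - i) = i
        omega
      · intro i hi
        rw [Finset.mem_Icc] at hi
        show x (q.getVert i) v = x (p.getVert (k - i)) v
        rw [hqv i]
    have hsum : (1:ℝ) ≤ ∑ j ∈ Finset.range (k+1),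
        min (x (p.getVert j) u) (x (p.getVert j) v) := by
      have h1 := hfeas u v
      have himg : Finset.univ.filter (· ∈ pathSet G u v)
          = (Finset.range (k+1)).image p.getVert := by
        ext t
        simp only [Finset.mem_filter, Finset.mem_univ, true_and, Finset.mem_image,
          Finset.mem_range]
        rw [mem_pathSet_iff hT hp]
        constructor
        · rintro ⟨i, hi, rfl⟩
          exact ⟨i, by omega, rfl⟩
        · rintro ⟨i, hi, rfl⟩
          exact ⟨i, by omega, rfl⟩
      rw [himg, Finset.sum_image] at h1
      · exact h1
      · intro i hi j hj hij
        rw [Finset.mem_coe, Finset.mem_range] at hi hj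
        exact getVert_inj hp (by omega) (by omega) hij
    have hsplit : ∑ j ∈ Finset.range (k+1), min (x (p.getVert j) u) (x (p.getVert j) v)
        = ∑ j ∈ Finset.Ico 0 b, min (x (p.getVert j) u) (x (p.getVert j) v)
          + ∑ j ∈ Finset.Ico b (k+1), min (x (p.getVert j) u) (x (p.getVert j) v) := by
      rw [Finset.range_eq_Ico,
        ← Finset.sum_Ico_consecutive _ (by omega : 0 ≤ b) (by omega : b ≤ k+1)]
    have hle1 : ∑ j ∈ Finset.Ico 0 b, min (x (p.getVert j) u) (x (p.getVert j) v)
        ≤ ∑ j ∈ Finset.Ico 0 b, x (p.getVert j) v :=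
      Finset.sum_le_sum fun j _ => min_le_right _ _
    have hle2 : ∑ j ∈ Finset.Ico b (k+1), min (x (p.getVert j) u) (x (p.getVert j) v)
        ≤ ∑ j ∈ Finset.Ico b (k+1), x (p.getVert j) u :=
      Finset.sum_le_sum fun j _ => min_le_left _ _
    have hle3 : ∑ j ∈ Finset.Ico b (k+1), x (p.getVert j) u
        ≤ ∑ j ∈ Finset.Icc (a+1) k, x (p.getVert j) u := by
      apply Finset.sum_le_sum_of_subset_of_nonneg
      · intro j hj
        rw [Finset.mem_Ico] at hj
        rw [Finset.mem_Icc]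
        omega
      · intro j _ _
        exact hx0 _ _
    linarith

end P6

end Stmt13X

/-- Given a finite tree, a cost function monotone non-decreasing with respect to
the target, and a feasible fractional LP solution `x`, there exists a
pseudo-separator assignment `S` with `Σ_{u ∈ S(v)} c(u,v) ≤ 2·Σ_u c(u,v)·x(u,v)`
for every `v`. -/
theorem stmt_13 {V : Type*} [Fintype V] (G : SimpleGraph V) (hT : G.IsTree)
    (c : V → V → ℝ) (hc0 : ∀ u v, 0 ≤ c u v)
    (hmono : ∀ u v t : V, u ∈ pathSet G v t → c u t ≤ c v t)
    (x : V → V → ℝ) (hx0 : ∀ u v, 0 ≤ x u v) (hx1 : ∀ u v, x u v ≤ 1)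
    (hfeas : ∀ v w : V,
      1 ≤ ∑ u ∈ Finset.univ.filter (· ∈ pathSet G v w), min (x u v) (x u w)) :
    ∃ S : V → Finset V, IsPseudoSepAssignment G S ∧
      ∀ v : V, (∑ u ∈ S v, c u v) ≤ 2 * ∑ u : V, c u v * x u v := by
  classical
  have hxd : ∀ a : V, 1 ≤ x a a := by
    intro a
    have h := hfeas a a
    have hps : pathSet G a a = {a} := Stmt13X.pathSet_self a
    have hfil : Finset.univ.filter (· ∈ pathSet G a a) = {a} := by
      ext t
      simp only [Finset.mem_filter, Finset.mem_univ, true_and, hps,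
        Set.mem_singleton_iff, Finset.mem_singleton]
    rw [hfil, Finset.sum_singleton, min_self] at h
    exact h
  refine ⟨fun v => Stmt13X.chosenS G x v, ?_, ?_⟩
  · intro u v
    exact Stmt13X.crossing hT x hx0 hxd hfeas u v
  · intro v
    exact Stmt13X.budget hT x c hx0 hc0 hmono v
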